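/- Let Γ be a locally compact Hausdorff topological space, let φ be a flow on Γ, let S ⊆ Γ be an isolated invariant set of φ, and let (A,R) be an attractor-repeller pair in S. Then there exists an index triple (L,M,N) for (A,R): compact sets N ⊆ M ⊆ L such that (L,M) is an index pair for R, (L,N) is an index pair for S, and (M,N) is an index pair for A. -/

import Mathlib

open Set
set_option maxHeartbeats 1000000

/-- A (continuous) flow on a topological space `Γ`. -/
def IsFlow {Γ : Type*} [TopologicalSpace Γ] (φ : Γ × ℝ → Γ) : Prop :=
  Continuous φ ∧ (∀ x, φ (x, 0) = x) ∧ ∀ (x : Γ) (s t : ℝ), φ (φ (x, s), t) = φ (x, s + t)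

/-- The maximal invariant subset of `U`. -/
def maxInv {Γ : Type*} (φ : Γ × ℝ → Γ) (U : Set Γ) : Set Γ :=
  {u | u ∈ U ∧ ∀ t : ℝ, φ (u, t) ∈ U}

/-- `U` is a compact (isolating) neighbourhood of `S` with `Inv U = S`. -/
def IsIsolatingNbhd {Γ : Type*} [TopologicalSpace Γ] (φ : Γ × ℝ → Γ) (U S : Set Γ) : Prop :=
  IsCompact U ∧ U ∈ nhdsSet S ∧ maxInv φ U = S

/-- `S` is an isolated invariant set of the flow `φ`. -/
def IsIsolatedInvariantSet {Γ : Type*} [TopologicalSpace Γ] (φ : Γ × ℝ → Γ) (S : Set Γ) : Prop :=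
  IsCompact S ∧ ∃ U : Set Γ, IsIsolatingNbhd φ U S

/-- `(M, N)` is an index pair for the isolated invariant set `S`. -/
def IsIndexPair {Γ : Type*} [TopologicalSpace Γ] (φ : Γ × ℝ → Γ) (S M N : Set Γ) : Prop :=
  IsCompact M ∧ IsCompact N ∧ N ⊆ M ∧
  IsIsolatingNbhd φ (closure (M \ N)) S ∧
  (∀ x ∈ N, ∀ t : ℝ, 0 ≤ t →
    (∀ s ∈ Icc (0 : ℝ) t, φ (x, s) ∈ M) → ∀ s ∈ Icc (0 : ℝ) t, φ (x, s) ∈ N) ∧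
  (∀ x ∈ M, ∀ t : ℝ, 0 ≤ t → φ (x, t) ∉ M → ∃ s ∈ Icc (0 : ℝ) t, φ (x, s) ∈ N)

/-- The ω-limit `ω(T)`: the maximal invariant set of the closure of the forward orbit of `T`. -/
def omegaSet {Γ : Type*} [TopologicalSpace Γ] (φ : Γ × ℝ → Γ) (T : Set Γ) : Set Γ :=
  maxInv φ (closure (φ '' (T ×ˢ Ici (0 : ℝ))))

/-- The ω*-limit `ω*(T)`: the maximal invariant set of the closure of the backward orbit of `T`. -/
def omegaStarSet {Γ : Type*} [TopologicalSpace Γ] (φ : Γ × ℝ → Γ) (T : Set Γ) : Set Γ :=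
  maxInv φ (closure (φ '' (T ×ˢ Iic (0 : ℝ))))

/-- `A` is an attractor in the isolated invariant set `S`: there is a neighbourhood `U` of `A`
in the subspace `S` with `A = ω(U)`. -/
def IsAttractorIn {Γ : Type*} [TopologicalSpace Γ] (φ : Γ × ℝ → Γ) (S A : Set Γ) : Prop :=
  A ⊆ S ∧ ∃ U : Set Γ, U ⊆ S ∧ (∃ V : Set Γ, IsOpen V ∧ A ⊆ V ∧ V ∩ S ⊆ U) ∧ omegaSet φ U = A

/-- `R` is a repeller in the isolated invariant set `S`: there is a neighbourhood `U` of `R`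
in the subspace `S` with `R = ω*(U)`. -/
def IsRepellerIn {Γ : Type*} [TopologicalSpace Γ] (φ : Γ × ℝ → Γ) (S R : Set Γ) : Prop :=
  R ⊆ S ∧ ∃ U : Set Γ, U ⊆ S ∧ (∃ V : Set Γ, IsOpen V ∧ R ⊆ V ∧ V ∩ S ⊆ U) ∧ omegaStarSet φ U = R

/-- The complementary repeller `A* = {x ∈ S | ω({x}) ∩ A = ∅}` of an attractor `A ⊆ S`. -/
def compRepeller {Γ : Type*} [TopologicalSpace Γ] (φ : Γ × ℝ → Γ) (S A : Set Γ) : Set Γ :=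
  {x ∈ S | omegaSet φ {x} ∩ A = ∅}

/-- The complementary attractor `R* = {x ∈ S | ω*({x}) ∩ R = ∅}` of a repeller `R ⊆ S`. -/
def compAttractor {Γ : Type*} [TopologicalSpace Γ] (φ : Γ × ℝ → Γ) (S R : Set Γ) : Set Γ :=
  {x ∈ S | omegaStarSet φ {x} ∩ R = ∅}

/-- `(A, R)` is an attractor-repeller pair in `S`. -/
def IsAttractorRepellerPair {Γ : Type*} [TopologicalSpace Γ] (φ : Γ × ℝ → Γ)
    (S A R : Set Γ) : Prop :=
  IsAttractorIn φ S A ∧ IsRepellerIn φ S R ∧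
    A = compAttractor φ S R ∧ R = compRepeller φ S A

section H
variable {Γ : Type*} [TopologicalSpace Γ] [T2Space Γ] {φ : Γ × ℝ → Γ}

private lemma aux_mapCont (hc : Continuous φ) (t : ℝ) : Continuous fun x => φ (x, t) :=
  hc.comp (continuous_id.prodMk continuous_const)

private lemma aux_pathCont (hc : Continuous φ) (x : Γ) : Continuous fun t => φ (x, t) :=
  hc.comp (continuous_const.prodMk continuous_id)

private lemma aux_maxInv_invariant (hadd : ∀ (x : Γ) (s t : ℝ), φ (φ (x, s), t) = φ (x, s + t))
    {C : Set Γ} {x : Γ} (hx : x ∈ maxInv φ C) (t : ℝ) : φ (x, t) ∈ maxInv φ C :=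
  ⟨hx.2 t, fun s => by rw [hadd]; exact hx.2 (t + s)⟩

private lemma aux_isClosed_pairPath {g : Γ × ℝ → Γ} (hg : Continuous g)
    {C : Set Γ} (hC : IsClosed C) (T : ℝ) :
    IsClosed {q : Γ × ℝ | q.2 ∈ Icc (0:ℝ) T ∧ ∀ r ∈ Icc (0:ℝ) q.2, g (q.1, r) ∈ C} := by
  rw [← isOpen_compl_iff, isOpen_iff_forall_mem_open]
  rintro ⟨z, τ⟩ hq
  by_cases hτ : τ ∈ Icc (0:ℝ) T
  · have hw : ∃ r ∈ Icc (0:ℝ) τ, g (z, r) ∉ C := by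
      by_contra h; push_neg at h; exact hq ⟨hτ, h⟩
    obtain ⟨r₀, hr₀, hgr₀⟩ := hw
    have hf : Continuous fun p : Γ × ℝ => g (p.1, min r₀ (max 0 p.2)) :=
      hg.comp (continuous_fst.prodMk (continuous_const.min (continuous_const.max continuous_snd)))
    refine ⟨(fun p : Γ × ℝ => g (p.1, min r₀ (max 0 p.2))) ⁻¹' Cᶜ, ?_,
      hC.isOpen_compl.preimage hf, ?_⟩
    · rintro ⟨y, s⟩ hys
      simp only [mem_preimage, mem_compl_iff] at hys ⊢
      rintro ⟨hsIcc, hall⟩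
      have hs0 : (0:ℝ) ≤ s := hsIcc.1
      have : min r₀ (max 0 s) ∈ Icc (0:ℝ) s :=
        ⟨le_min hr₀.1 (le_max_left _ _), min_le_of_right_le (by rw [max_eq_right hs0])⟩
      exact hys (hall _ this)
    · simp only [mem_preimage, mem_compl_iff]
      rw [max_eq_right hτ.1, min_eq_left hr₀.2]
      exact hgr₀
  · exact ⟨Prod.snd ⁻¹' (Icc (0:ℝ) T)ᶜ, fun q hq' h => (hq' h.1 : _),
      isClosed_Icc.isOpen_compl.preimage continuous_snd, hτ⟩

private lemma aux_isClosed_relIcc {ψ : ℝ → Γ} (hψ : Continuous ψ)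
    {C : Set Γ} (hC : IsClosed C) (a b : ℝ) :
    IsClosed {p : ℝ | p ∈ Icc a b ∧ ∀ v ∈ Icc a p, ψ v ∈ C} := by
  rw [← isOpen_compl_iff, isOpen_iff_forall_mem_open]
  intro p₀ hp₀
  by_cases hpI : p₀ ∈ Icc a b
  · have hw : ∃ v₀ ∈ Icc a p₀, ψ v₀ ∉ C := by
      by_contra h; push_neg at h; exact hp₀ ⟨hpI, h⟩
    obtain ⟨v₀, hv₀, hψv₀⟩ := hw
    have hf : Continuous fun p : ℝ => ψ (min v₀ (max a p)) :=
      hψ.comp (continuous_const.min (continuous_const.max continuous_id))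
    refine ⟨(fun p : ℝ => ψ (min v₀ (max a p))) ⁻¹' Cᶜ, ?_, hC.isOpen_compl.preimage hf, ?_⟩
    · intro p hp
      simp only [mem_preimage, mem_compl_iff] at hp ⊢
      rintro ⟨hpI', hall⟩
      have : min v₀ (max a p) ∈ Icc a p :=
        ⟨le_min hv₀.1 (le_max_left _ _), min_le_of_right_le (by rw [max_eq_right hpI'.1])⟩
      exact hp (hall _ this)
    · simp only [mem_preimage, mem_compl_iff]
      rw [max_eq_right hpI.1, min_eq_left hv₀.2]
      exact hψv₀
  · exact ⟨(Icc a b)ᶜ, fun q hq h => hq h.1, isClosed_Icc.isOpen_compl, hpI⟩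

private lemma aux_tube (hc : Continuous φ) {O : Set Γ} (hO : IsOpen O)
    {C : Set Γ} (hCc : IsCompact C) {J : Set ℝ} (hJ : IsCompact J)
    (h : ∀ x ∈ C, ∀ p ∈ J, φ (x, p) ∈ O) :
    ∃ V : Set Γ, IsOpen V ∧ C ⊆ V ∧ ∀ y ∈ V, ∀ p ∈ J, φ (y, p) ∈ O := by
  have hsub : C ×ˢ J ⊆ φ ⁻¹' O := by rintro ⟨x, p⟩ ⟨hx, hp⟩; exact h x hx p hp
  obtain ⟨u, v, huo, _, hCu, hJv, huv⟩ := generalized_tube_lemma hCc hJ (hO.preimage hc) hsub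
  exact ⟨u, huo, hCu, fun y hy p hp => huv (mk_mem_prod hy (hJv hp))⟩

private lemma aux_maxInv_mono {C D : Set Γ} (h : C ⊆ D) : maxInv φ C ⊆ maxInv φ D :=
  fun _ hx => ⟨h hx.1, fun t => h (hx.2 t)⟩

private lemma aux_isClosed_maxInv (hc : Continuous φ) {C : Set Γ} (hC : IsClosed C) :
    IsClosed (maxInv φ C) := by
  have : maxInv φ C = C ∩ ⋂ t : ℝ, (fun x => φ (x, t)) ⁻¹' C := by
    ext x; simp only [maxInv, mem_setOf_eq, mem_inter_iff, mem_iInter, mem_preimage]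
  rw [this]
  exact hC.inter (isClosed_iInter fun t => hC.preimage (aux_mapCont hc t))

/-- Positive invariance, relative to `L`, of the closure of a set `D` which is positively
invariant relative to `U` (up to falling into the `N₀` exit set at a boundary touch). -/
private lemma aux_closure_ext (hc : Continuous φ) {U L N₀ D : Set Γ}
    (hLU : L ⊆ U)
    (hCB : ∀ x u, 0 ≤ u → (∀ p ∈ Icc (0:ℝ) u, φ (x, p) ∈ L) →
      (∃ r ∈ Icc (0:ℝ) u, φ (x, r) ∉ interior U) → φ (x, u) ∈ N₀)
    (hDext : ∀ y ∈ D, ∀ u, 0 ≤ u → (∀ p ∈ Icc (0:ℝ) u, φ (y, p) ∈ U) → φ (y, u) ∈ D) :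
    ∀ x ∈ closure D, ∀ u, 0 ≤ u → (∀ p ∈ Icc (0:ℝ) u, φ (x, p) ∈ L) →
      φ (x, u) ∈ closure D ∪ N₀ := by
  intro x hx u hu hpath
  by_cases htouch : ∃ r ∈ Icc (0:ℝ) u, φ (x, r) ∉ interior U
  · exact Or.inr (hCB x u hu hpath htouch)
  · push_neg at htouch
    left
    obtain ⟨V, hVopen, hxV, hV⟩ := aux_tube hc isOpen_interior isCompact_singleton
      (isCompact_Icc (a := (0:ℝ)) (b := u))
      (fun y hy p hp => by rw [mem_singleton_iff] at hy; subst hy; exact htouch p hp)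
    rw [mem_closure_iff]
    intro O hOopen hO
    obtain ⟨y, ⟨hyV, hyO⟩, hyD⟩ := mem_closure_iff.mp hx (V ∩ (fun y => φ (y, u)) ⁻¹' O)
      (hVopen.inter (hOopen.preimage (aux_mapCont hc u))) ⟨hxV rfl, hO⟩
    exact ⟨φ (y, u), hyO, hDext y hyD u hu (fun p hp => interior_subset (hV y hyV p hp))⟩

private lemma aux_squeeze (hc : Continuous φ) (h0 : ∀ x, φ (x, 0) = x)
    {U S W : Set Γ} (hU : IsCompact U) (hmax : maxInv φ U = S) (hW : IsOpen W) (hSW : S ⊆ W) :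
    ∃ T : ℝ, 0 ≤ T ∧ ∀ x, (∀ r ∈ Icc (-T) T, φ (x, r) ∈ U) → x ∈ W := by
  by_contra hcon
  push_neg at hcon
  set B : ℝ → Set Γ := fun t => {x | (∀ r ∈ Icc (-|t|) (|t|), φ (x, r) ∈ U) ∧ x ∉ W} with hB
  have hBne : ∀ t, (B t).Nonempty := by
    intro t
    obtain ⟨x, hx1, hx2⟩ := hcon |t| (abs_nonneg t)
    exact ⟨x, hx1, hx2⟩
  have hBeq : ∀ t, B t = (⋂ r ∈ Icc (-|t|) (|t|), (fun x => φ (x, r)) ⁻¹' U) ∩ Wᶜ := by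
    intro t; ext x
    simp only [hB, mem_setOf_eq, mem_inter_iff, mem_iInter, mem_preimage, mem_compl_iff]
  have hBclosed : ∀ t, IsClosed (B t) := by
    intro t; rw [hBeq]
    exact (isClosed_biInter fun r _ => hU.isClosed.preimage (aux_mapCont hc r)).inter
      hW.isClosed_compl
  have hBsub : ∀ t, B t ⊆ U := by
    intro t x hx
    have := hx.1 0 ⟨neg_nonpos.mpr (abs_nonneg t), abs_nonneg t⟩
    rwa [h0] at this
  have hBcomp : ∀ t, IsCompact (B t) := fun t =>
    IsCompact.of_isClosed_subset hU (hBclosed t) (hBsub t)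
  have hdir : Directed (· ⊇ ·) B := by
    intro s t
    refine ⟨|s| + |t|, ?_, ?_⟩ <;>
    · intro x hx
      refine ⟨fun r hr => hx.1 r ⟨?_, ?_⟩, hx.2⟩ <;>
      · rw [abs_of_nonneg (by positivity : (0:ℝ) ≤ |s| + |t|)]
        rcases hr with ⟨h1, h2⟩
        linarith [abs_nonneg s, abs_nonneg t]
  obtain ⟨z, hz⟩ := IsCompact.nonempty_iInter_of_directed_nonempty_isCompact_isClosed
    B hdir hBne hBcomp hBclosed
  have hzB : ∀ t, z ∈ B t := by simpa [mem_iInter] using hz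
  have hzS : z ∈ S := by
    rw [← hmax]
    exact ⟨hBsub 0 (hzB 0), fun t => (hzB t).1 t ⟨neg_abs_le t, le_abs_self t⟩⟩
  exact (hzB 0).2 (hSW hzS)

private lemma aux_lastStay (hc : Continuous φ) {U : Set Γ} (hUc : IsClosed U)
    {x : Γ} {u q : ℝ} (huq : u ≤ q) (hu : φ (x, u) ∈ U) (hq : φ (x, q) ∉ U) :
    ∃ σ, u ≤ σ ∧ σ ≤ q ∧ (∀ v ∈ Icc u σ, φ (x, v) ∈ U) ∧ φ (x, σ) ∉ interior U := by
  set SS := {p : ℝ | p ∈ Icc u q ∧ ∀ v ∈ Icc u p, φ (x, v) ∈ U} with hSSdef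
  have hSSclosed : IsClosed SS := aux_isClosed_relIcc (aux_pathCont hc x) hUc u q
  have hSSne : SS.Nonempty := by
    refine ⟨u, ⟨le_rfl, huq⟩, ?_⟩
    rintro v ⟨hv1, hv2⟩
    have : v = u := le_antisymm hv2 hv1
    rwa [this]
  have hSSbdd : BddAbove SS := ⟨q, fun p hp => hp.1.2⟩
  obtain ⟨⟨hσu, hσq⟩, hσU⟩ := hSSclosed.csSup_mem hSSne hSSbdd
  refine ⟨sSup SS, hσu, hσq, hσU, ?_⟩
  set σ := sSup SS
  intro hint
  have hσq' : σ < q := by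
    rcases eq_or_lt_of_le hσq with h | h
    · exact absurd (by rw [← h] at hq; exact hq) (by simp [hσU σ ⟨hσu, le_rfl⟩])
    · exact h
  obtain ⟨ε, hε, hball⟩ :=
    Metric.isOpen_iff.mp (isOpen_interior.preimage (aux_pathCont hc x)) σ hint
  have hδpos : 0 < min (ε/2) (q - σ) := lt_min (half_pos hε) (sub_pos.mpr hσq')
  set δ := min (ε/2) (q - σ) with hδdef
  have hmem : σ + δ ∈ SS := by
    refine ⟨⟨by linarith, by have := min_le_right (ε/2) (q - σ); linarith⟩, ?_⟩
    rintro v ⟨hv0, hvle⟩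
    by_cases hvσ : v ≤ σ
    · exact hσU v ⟨hv0, hvσ⟩
    · push_neg at hvσ
      have hvball : v ∈ Metric.ball σ ε := by
        rw [Metric.mem_ball, Real.dist_eq, abs_of_pos (by linarith)]
        have := min_le_left (ε/2) (q - σ)
        linarith
      exact interior_subset (hball hvball)
  have := le_csSup hSSbdd hmem
  linarith

/-- Construction of the modified isolating block data for `S` inside `U`:
`L` (the index pair's big set), `N₀` (the pre-exit set), `K` (a safety collar). -/
private lemma aux_spack (hc : Continuous φ) (h0 : ∀ x, φ (x, 0) = x)
    (hadd : ∀ (x : Γ) (s t : ℝ), φ (φ (x, s), t) = φ (x, s + t))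
    [LocallyCompactSpace Γ]
    {U S : Set Γ} (hUcomp : IsCompact U) (hSU : S ⊆ interior U)
    (hmax : maxInv φ U = S) (hScomp : IsCompact S) :
    ∃ L N₀ K : Set Γ,
      IsCompact L ∧ L ⊆ U ∧ S ⊆ interior L ∧ S ⊆ interior K ∧
      N₀ ⊆ L ∧ (∀ y ∈ N₀, y ∉ interior K) ∧
      (∀ x ∈ L, ∀ u, 0 ≤ u → (∀ p ∈ Icc (0:ℝ) u, φ (x, p) ∈ U) →
        ∀ p ∈ Icc (0:ℝ) u, φ (x, p) ∈ L) ∧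
      (∀ x u, 0 ≤ u → (∀ p ∈ Icc (0:ℝ) u, φ (x, p) ∈ L) →
        (∃ r ∈ Icc (0:ℝ) u, φ (x, r) ∉ interior U) → φ (x, u) ∈ N₀) ∧
      (∀ y ∈ N₀, ∀ u, 0 ≤ u → (∀ p ∈ Icc (0:ℝ) u, φ (y, p) ∈ U) → φ (y, u) ∈ N₀) ∧
      (∀ x ∈ L, ∀ t, 0 ≤ t → (∃ q ∈ Icc (0:ℝ) t, φ (x, q) ∉ U) →
        ∃ s ∈ Icc (0:ℝ) t, φ (x, s) ∈ N₀) := by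
  have hSinv : ∀ x ∈ S, ∀ t : ℝ, φ (x, t) ∈ S := by
    intro x hx t
    rw [← hmax] at hx ⊢
    exact aux_maxInv_invariant hadd hx t
  -- squeeze time
  obtain ⟨T, hT0, hT⟩ := aux_squeeze hc h0 hUcomp hmax isOpen_interior hSU
  -- the set of points reaching the non-interior of U backwards within time T
  set Cpair := {q : Γ × ℝ | (q.2 ∈ Icc (0:ℝ) T ∧ ∀ r ∈ Icc (0:ℝ) q.2, φ (q.1, -r) ∈ U) ∧
      φ (q.1, -q.2) ∉ interior U} with hCpairdef
  have hCpairclosed : IsClosed Cpair := by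
    refine IsClosed.inter ?_ ?_
    · exact aux_isClosed_pairPath (hc.comp (continuous_fst.prodMk continuous_snd.neg))
        hUcomp.isClosed T
    · exact isOpen_interior.isClosed_compl.preimage
        (hc.comp (continuous_fst.prodMk continuous_snd.neg))
  have hCpairsub : Cpair ⊆ U ×ˢ Icc (0:ℝ) T := by
    rintro ⟨z, τ⟩ ⟨⟨hτ, hpath⟩, _⟩
    have := hpath 0 ⟨le_rfl, hτ.1⟩
    rw [neg_zero, h0] at this
    exact ⟨this, hτ⟩
  have hCpaircomp : IsCompact Cpair :=
    IsCompact.of_isClosed_subset (hUcomp.prod isCompact_Icc) hCpairclosed hCpairsub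
  set RT := Prod.fst '' Cpair with hRTdef
  have hRTcomp : IsCompact RT := hCpaircomp.image continuous_fst
  have hRTS : ∀ z ∈ S, z ∉ RT := by
    rintro z hz ⟨⟨z', τ⟩, ⟨⟨hτ, _⟩, hend⟩, rfl⟩
    exact hend (hSU (hSinv z' hz (-τ)))
  -- the collar K
  obtain ⟨K, hKcomp, hSK, hKsub⟩ := exists_compact_between hScomp
    (isOpen_interior.inter hRTcomp.isClosed.isOpen_compl)
    (fun x hx => ⟨hSU hx, hRTS x hx⟩)
  have hKint : interior K ⊆ interior U :=
    (interior_mono (hKsub.trans inter_subset_left)).trans interior_interior.subset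
  have hKRT : ∀ p ∈ interior K, p ∉ RT := fun p hp => (hKsub (interior_subset hp)).2
  -- the large set L
  set L := {x : Γ | ∀ r ∈ Icc (0:ℝ) T, φ (x, -r) ∈ U} with hLdef
  have hLclosed : IsClosed L := by
    have : L = ⋂ r ∈ Icc (0:ℝ) T, (fun x => φ (x, -r)) ⁻¹' U := by
      ext x; simp only [hLdef, mem_setOf_eq, mem_iInter, mem_preimage]
    rw [this]
    exact isClosed_biInter fun r _ => hUcomp.isClosed.preimage (aux_mapCont hc (-r))
  have hLU : L ⊆ U := by
    intro x hx
    have := hx 0 ⟨le_rfl, hT0⟩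
    rwa [neg_zero, h0] at this
  have hLcomp : IsCompact L := IsCompact.of_isClosed_subset hUcomp hLclosed hLU
  have hSL : S ⊆ interior L := by
    obtain ⟨V, hVopen, hSV, hV⟩ := aux_tube hc isOpen_interior hScomp
      (isCompact_Icc (a := -T) (b := (0:ℝ)))
      (fun x hx p _ => hSU (hSinv x hx p))
    refine (subset_interior_iff).mpr ⟨V, hVopen, hSV, ?_⟩
    intro y hy r hr
    exact interior_subset (hV y hy (-r) ⟨neg_le_neg hr.2, neg_nonpos.mpr hr.1⟩)
  have hLext : ∀ x ∈ L, ∀ u, 0 ≤ u → (∀ p ∈ Icc (0:ℝ) u, φ (x, p) ∈ U) →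
      ∀ p ∈ Icc (0:ℝ) u, φ (x, p) ∈ L := by
    intro x hx u hu hpath p hp r hr
    rw [hadd]
    by_cases hc' : 0 ≤ p - r
    · exact hpath (p + -r) ⟨by linarith, by linarith [hr.1, hp.2]⟩
    · push_neg at hc'
      have : p + -r = -(r - p) := by ring
      rw [this]
      exact hx (r - p) ⟨by linarith, by linarith [hp.1, hr.2]⟩
  -- the pre-exit set N₀
  set N₀ := {y : Γ | y ∈ L ∧ ∃ s, 0 ≤ s ∧
      (∀ h ∈ Icc (0:ℝ) s, φ (y, h) ∈ U ∧ φ (y, h) ∉ interior K) ∧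
      φ (y, s) ∉ interior U} with hN₀def
  have hN₀L : N₀ ⊆ L := fun y hy => hy.1
  have hN₀K : ∀ y ∈ N₀, y ∉ interior K := by
    rintro y ⟨hyL, s, hs0, hall, _⟩
    have := (hall 0 ⟨le_rfl, hs0⟩).2
    rwa [h0] at this
  -- the key exit lemma (CB)
  have hCB : ∀ x u, 0 ≤ u → (∀ p ∈ Icc (0:ℝ) u, φ (x, p) ∈ L) →
      (∃ r ∈ Icc (0:ℝ) u, φ (x, r) ∉ interior U) → φ (x, u) ∈ N₀ := by
    intro x u hu hpathL htouch
    obtain ⟨r, hr, hrint⟩ := htouch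
    set TS := {p : ℝ | p ∈ Icc (0:ℝ) u ∧ φ (x, p) ∈ (interior U)ᶜ} with hTSdef
    have hTSclosed : IsClosed TS := by
      have : TS = Icc (0:ℝ) u ∩ (fun p => φ (x, p)) ⁻¹' (interior U)ᶜ := by
        ext p; simp only [hTSdef, mem_setOf_eq, mem_inter_iff, mem_preimage]
      rw [this]
      exact isClosed_Icc.inter (isOpen_interior.isClosed_compl.preimage (aux_pathCont hc x))
    have hTSne : TS.Nonempty := ⟨r, hr, hrint⟩
    have hTSbdd : BddAbove TS := ⟨u, fun p hp => hp.1.2⟩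
    obtain ⟨hpIcc, hpint⟩ := hTSclosed.csSup_mem hTSne hTSbdd
    set ps := sSup TS
    have hyL : φ (x, ps) ∈ L := hpathL ps hpIcc
    have hesc : ∃ w ∈ Icc (0:ℝ) T, φ (φ (x, ps), w) ∉ U := by
      by_contra hno
      push_neg at hno
      refine hpint (hT (φ (x, ps)) ?_)
      intro r' hr'
      by_cases h' : 0 ≤ r'
      · exact hno r' ⟨h', hr'.2⟩
      · push_neg at h'
        have := hyL (-r') ⟨by linarith, by linarith [hr'.1]⟩
        rwa [neg_neg] at this
    obtain ⟨w, hw, hwU⟩ := hesc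
    have hq : φ (x, ps + w) ∉ U := by rw [← hadd]; exact hwU
    have hqu : u < ps + w := by
      by_contra hle
      push_neg at hle
      exact hq (hLU (hpathL (ps + w) ⟨by linarith [hpIcc.1, hw.1], hle⟩))
    have hfu : φ (x, u) ∈ U := hLU (hpathL u ⟨hu, le_rfl⟩)
    obtain ⟨σ, hσu, hσq, hσU, hσint⟩ := aux_lastStay hc hUcomp.isClosed (le_of_lt hqu) hfu hq
    have havoid : ∀ p ∈ Icc u σ, φ (x, p) ∉ interior K := by
      rintro p ⟨hpu, hpσ⟩ hpK
      have hpsu : ps ≤ u := hpIcc.2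
      have hτ0 : (0:ℝ) ≤ p - ps := by linarith
      have hτT : p - ps ≤ T := by linarith [hw.2]
      refine hKRT _ hpK ⟨(φ (x, p), p - ps), ⟨⟨⟨hτ0, hτT⟩, ?_⟩, ?_⟩, rfl⟩
      · rintro r' ⟨hr'0, hr'τ⟩
        have hr'τ' : r' ≤ p - ps := hr'τ
        rw [hadd]
        by_cases hcase : u ≤ p + -r'
        · exact hσU (p + -r') ⟨hcase, by linarith⟩
        · push_neg at hcase
          exact hLU (hpathL (p + -r') ⟨by linarith [hpIcc.1], by linarith⟩)
      · rw [hadd]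
        have heq : p + -(p - ps) = ps := by ring
        rw [heq]
        exact hpint
    refine ⟨hpathL u ⟨hu, le_rfl⟩, σ - u, by linarith, ?_, ?_⟩
    · rintro h ⟨hh0, hhle⟩
      rw [hadd]
      exact ⟨hσU (u + h) ⟨by linarith, by linarith⟩, havoid (u + h) ⟨by linarith, by linarith⟩⟩
    · rw [hadd]
      have heq : u + (σ - u) = σ := by ring
      rw [heq]
      exact hσint
  -- relative positive invariance of N₀
  have hClaimB : ∀ y ∈ N₀, ∀ u, 0 ≤ u → (∀ p ∈ Icc (0:ℝ) u, φ (y, p) ∈ U) → φ (y, u) ∈ N₀ := by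
    rintro y ⟨hyL, s, hs0, hall, hsint⟩ u hu hpath
    have hpathL : ∀ p ∈ Icc (0:ℝ) u, φ (y, p) ∈ L := hLext y hyL u hu hpath
    by_cases hcase : u ≤ s
    · refine ⟨hpathL u ⟨hu, le_rfl⟩, s - u, by linarith, ?_, ?_⟩
      · rintro h ⟨hh0, hh⟩
        rw [hadd]
        exact hall (u + h) ⟨by linarith, by linarith⟩
      · rw [hadd]
        have heq : u + (s - u) = s := by ring
        rw [heq]
        exact hsint
    · push_neg at hcase
      exact hCB y u hu hpathL ⟨s, ⟨hs0, le_of_lt hcase⟩, hsint⟩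
  -- exit through N₀
  have hNIII : ∀ x ∈ L, ∀ t, 0 ≤ t → (∃ q ∈ Icc (0:ℝ) t, φ (x, q) ∉ U) →
      ∃ s ∈ Icc (0:ℝ) t, φ (x, s) ∈ N₀ := by
    rintro x hxL t ht ⟨q, hq, hqU⟩
    have hx0 : φ (x, 0) ∈ U := by rw [h0]; exact hLU hxL
    obtain ⟨σ, hσ0, hσq, hσU, hσint⟩ := aux_lastStay hc hUcomp.isClosed hq.1 hx0 hqU
    have hφσL : φ (x, σ) ∈ L := hLext x hxL σ hσ0 hσU σ ⟨hσ0, le_rfl⟩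
    refine ⟨σ, ⟨hσ0, hσq.trans hq.2⟩, hφσL, 0, le_rfl, ?_, ?_⟩
    · rintro h ⟨hh0, hh1⟩
      have : h = 0 := le_antisymm hh1 hh0
      subst this
      rw [h0]
      exact ⟨hσU σ ⟨hσ0, le_rfl⟩, fun hK => hσint (hKint hK)⟩
    · rw [h0]
      exact hσint
  exact ⟨L, N₀, K, hLcomp, hLU, hSL, hSK, hN₀L, hN₀K, hLext, hCB, hClaimB, hNIII⟩


/-- A point whose backward orbit lies in a compact set has a backward ω-limit point there. -/
private lemma aux_omegaStar_nonempty (hc : Continuous φ) (h0 : ∀ x, φ (x, 0) = x)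
    (hadd : ∀ (x : Γ) (s t : ℝ), φ (φ (x, s), t) = φ (x, s + t))
    {x : Γ} {C : Set Γ} (hC : IsCompact C) (horb : ∀ t : ℝ, t ≤ 0 → φ (x, t) ∈ C) :
    ∃ w ∈ C, w ∈ omegaStarSet φ {x} := by
  set F : Filter Γ := Filter.map (fun n : ℝ => φ (x, -n)) Filter.atTop with hF
  have hFne : F.NeBot := Filter.map_neBot
  have hFle : F ≤ Filter.principal C := by
    rw [Filter.le_principal_iff, hF, Filter.mem_map]
    filter_upwards [Filter.eventually_ge_atTop (0:ℝ)] with n hn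
    exact horb (-n) (neg_nonpos.mpr hn)
  obtain ⟨w, hwC, hwcl⟩ := hC.exists_clusterPt hFle
  refine ⟨w, hwC, ?_⟩
  have key : ∀ t : ℝ, φ (w, t) ∈ closure (φ '' ({x} ×ˢ Iic (0:ℝ))) := by
    intro t
    have h1 : ClusterPt (φ (w, t)) (Filter.map (fun y => φ (y, t)) F) :=
      hwcl.map (aux_mapCont hc t).continuousAt Filter.tendsto_map
    have h2 : Filter.map (fun y => φ (y, t)) F ≤ Filter.principal (φ '' ({x} ×ˢ Iic (0:ℝ))) := by
      rw [hF, Filter.map_map, Filter.le_principal_iff, Filter.mem_map]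
      filter_upwards [Filter.eventually_ge_atTop t] with n hn
      simp only [mem_preimage, Function.comp_apply]
      rw [hadd]
      exact ⟨(x, -n + t), ⟨rfl, by simp; linarith⟩, rfl⟩
    rw [mem_closure_iff_clusterPt]
    exact h1.mono h2
  refine ⟨?_, key⟩
  have := key 0
  rwa [h0] at this

/-- The key limit lemma: for a small enough compact neighbourhood `P` of the attractor `A`,
the closure of the forward flow-out of `P` within `L` avoids the repeller `R`. -/
private lemma aux_lemZ (hc : Continuous φ) (h0 : ∀ x, φ (x, 0) = x)
    (hadd : ∀ (x : Γ) (s t : ℝ), φ (φ (x, s), t) = φ (x, s + t))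
    [LocallyCompactSpace Γ]
    {U S A R L : Set Γ} (hLcomp : IsCompact L) (hLU : L ⊆ U) (hmax : maxInv φ U = S)
    (hAcomp : IsCompact A) (hAinv : ∀ x ∈ A, ∀ t : ℝ, φ (x, t) ∈ A)
    (hRclosed : IsClosed R) (hRinv : ∀ x ∈ R, ∀ t : ℝ, φ (x, t) ∈ R)
    (hARdisj : ∀ x ∈ A, x ∉ R)
    (hReq : R = compRepeller φ S A) :
    ∃ P : Set Γ, IsCompact P ∧ A ⊆ interior P ∧
      closure {x | ∃ t, 0 ≤ t ∧ (∀ r ∈ Icc (0:ℝ) t, φ (x, -r) ∈ L) ∧ φ (x, -t) ∈ P} ∩ R = ∅ := by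
  obtain ⟨VA, hVAcomp, hAVA, hVAR⟩ := exists_compact_between hAcomp hRclosed.isOpen_compl hARdisj
  set OA := interior VA with hOAdef
  have hOAopen : IsOpen OA := isOpen_interior
  have hclOA : closure OA ⊆ VA := closure_minimal interior_subset hVAcomp.isClosed
  have hclOAR : ∀ x ∈ closure OA, x ∉ R := fun x hx => hVAR (hclOA hx)
  obtain ⟨P₀, hP₀comp, hAP₀, hP₀OA⟩ := exists_compact_between hAcomp hOAopen hAVA
  by_contra hcon
  push_neg at hcon
  haveI hιne : Nonempty {P : Set Γ // IsCompact P ∧ A ⊆ interior P ∧ P ⊆ P₀} :=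
    ⟨⟨P₀, hP₀comp, hAP₀, subset_rfl⟩⟩
  set DD : {P : Set Γ // IsCompact P ∧ A ⊆ interior P ∧ P ⊆ P₀} → Set Γ := fun P =>
    {x | ∃ t, 0 ≤ t ∧ (∀ r ∈ Icc (0:ℝ) t, φ (x, -r) ∈ L) ∧ φ (x, -t) ∈ P.1} with hDDdef
  have hDDL : ∀ P : {P : Set Γ // IsCompact P ∧ A ⊆ interior P ∧ P ⊆ P₀}, DD P ⊆ L := by
    rintro P x ⟨t, ht, hpath, -⟩
    have := hpath 0 ⟨le_rfl, ht⟩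
    rwa [neg_zero, h0] at this
  have hDDmono : ∀ P Q : {P : Set Γ // IsCompact P ∧ A ⊆ interior P ∧ P ⊆ P₀},
      P.1 ⊆ Q.1 → DD P ⊆ DD Q := by
    rintro P Q hPQ x ⟨t, ht, hpath, hend⟩
    exact ⟨t, ht, hpath, hPQ hend⟩
  have hdirP : ∀ P Q : {P : Set Γ // IsCompact P ∧ A ⊆ interior P ∧ P ⊆ P₀},
      ∃ Rp : {P : Set Γ // IsCompact P ∧ A ⊆ interior P ∧ P ⊆ P₀}, Rp.1 ⊆ P.1 ∧ Rp.1 ⊆ Q.1 := by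
    intro P Q
    obtain ⟨P₃, h3c, h3i, h3s⟩ := exists_compact_between hAcomp
      (isOpen_interior.inter isOpen_interior)
      (fun a ha => ⟨P.2.2.1 ha, Q.2.2.1 ha⟩)
    exact ⟨⟨P₃, h3c, h3i, fun x hx => P.2.2.2 (interior_subset (h3s hx).1)⟩,
      fun x hx => interior_subset (h3s hx).1, fun x hx => interior_subset (h3s hx).2⟩
  have hne : ∀ P : {P : Set Γ // IsCompact P ∧ A ⊆ interior P ∧ P ⊆ P₀},
      (closure (DD P) ∩ R).Nonempty := fun P => hcon P.1 P.2.1 P.2.2.1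
  have hfamdir : Directed (· ⊇ ·) (fun P => closure (DD P) ∩ R) := by
    intro P Q
    obtain ⟨Rp, h1, h2⟩ := hdirP P Q
    exact ⟨Rp, inter_subset_inter_left R (closure_mono (hDDmono _ _ h1)),
      inter_subset_inter_left R (closure_mono (hDDmono _ _ h2))⟩
  have hfam : (⋂ P, closure (DD P) ∩ R).Nonempty :=
    IsCompact.nonempty_iInter_of_directed_nonempty_isCompact_isClosed _ hfamdir hne
      (fun P => (IsCompact.of_isClosed_subset hLcomp isClosed_closure
        (closure_minimal (hDDL P) hLcomp.isClosed)).inter_right hRclosed)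
      (fun P => isClosed_closure.inter hRclosed)
  obtain ⟨z, hz⟩ := hfam
  have hzmem : ∀ P : {P : Set Γ // IsCompact P ∧ A ⊆ interior P ∧ P ⊆ P₀},
      z ∈ closure (DD P) := fun P => (mem_iInter.mp hz P).1
  have hzR : z ∈ R := (mem_iInter.mp hz hιne.some).2
  have hzOA : z ∉ closure OA := fun h => hclOAR z h hzR
  have hPAinter : ∀ x : Γ, (∀ P : {P : Set Γ // IsCompact P ∧ A ⊆ interior P ∧ P ⊆ P₀},
      x ∈ P.1) → x ∈ A := by
    intro x hx
    by_contra hxA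
    obtain ⟨P', hP'c, hP'i, hP's⟩ := exists_compact_between hAcomp
      (isOpen_interior.inter isClosed_singleton.isOpen_compl)
      (fun a ha => ⟨hAP₀ ha, fun h => hxA (by have : a = x := mem_singleton_iff.mp h; rw [← this]; exact ha)⟩)
    have hxP' : x ∈ P' := hx ⟨P', hP'c, hP'i, fun y hy => interior_subset (hP's hy).1⟩
    exact (hP's hxP').2 rfl
  -- the "last exit from `closure OA`" decomposition
  set FF : {P : Set Γ // IsCompact P ∧ A ⊆ interior P ∧ P ⊆ P₀} → Set Γ := fun P =>
    {x | ∃ c, (c ∈ closure OA ∧ c ∈ L ∧ ∃ σ, 0 ≤ σ ∧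
        (∀ r ∈ Icc (0:ℝ) σ, φ (c, -r) ∈ L) ∧ φ (c, -σ) ∈ P.1) ∧
      ∃ e, 0 ≤ e ∧ (∀ h' ∈ Icc (0:ℝ) e, φ (c, h') ∈ L) ∧
        (∀ h', 0 < h' → h' ≤ e → φ (c, h') ∉ closure OA) ∧ x = φ (c, e)} with hFFdef
  have hDFF : ∀ P : {P : Set Γ // IsCompact P ∧ A ⊆ interior P ∧ P ⊆ P₀},
      DD P \ closure OA ⊆ FF P := by
    rintro P x ⟨⟨t, ht, hpath, hend⟩, hxOA⟩
    set Sex := {s : ℝ | s ∈ Icc (0:ℝ) t ∧ φ (x, s - t) ∈ closure OA} with hSexdef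
    have hSexclosed : IsClosed Sex := by
      have : Sex = Icc (0:ℝ) t ∩ (fun s => φ (x, s - t)) ⁻¹' closure OA := by
        ext s; simp only [hSexdef, mem_setOf_eq, mem_inter_iff, mem_preimage]
      rw [this]
      exact isClosed_Icc.inter (isClosed_closure.preimage
        ((aux_pathCont hc x).comp (continuous_id.sub continuous_const)))
    have hSexne : Sex.Nonempty := by
      refine ⟨0, ⟨le_rfl, ht⟩, ?_⟩
      rw [zero_sub]
      exact subset_closure (hP₀OA (P.2.2.2 hend))
    have hSexbdd : BddAbove Sex := ⟨t, fun s hs => hs.1.2⟩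
    obtain ⟨⟨hσe0, hσet⟩, hσeOA⟩ := hSexclosed.csSup_mem hSexne hSexbdd
    set σe := sSup Sex with hσedef
    have hcL : φ (x, σe - t) ∈ L := by
      have := hpath (t - σe) ⟨by linarith, by linarith⟩
      rwa [neg_sub] at this
    refine ⟨φ (x, σe - t), ⟨hσeOA, hcL, σe, hσe0, ?_, ?_⟩, t - σe, by linarith, ?_, ?_, ?_⟩
    · rintro r' ⟨h1, h2⟩
      rw [hadd]
      have heq : σe - t + -r' = -(t - σe + r') := by ring
      rw [heq]
      exact hpath (t - σe + r') ⟨by linarith, by linarith⟩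
    · rw [hadd]
      have heq : σe - t + -σe = -t := by ring
      rw [heq]
      exact hend
    · rintro h' ⟨h1, h2⟩
      rw [hadd]
      have heq : σe - t + h' = -(t - σe - h') := by ring
      rw [heq]
      exact hpath (t - σe - h') ⟨by linarith, by linarith⟩
    · intro h' h'pos h'le hmem
      have hmem' : σe + h' ∈ Sex := by
        refine ⟨⟨by linarith, by linarith⟩, ?_⟩
        have heq : σe + h' - t = σe - t + h' := by ring
        rw [heq, ← hadd]
        exact hmem
      have := le_csSup hSexbdd hmem'
      linarith
    · rw [hadd]
      have heq : σe - t + (t - σe) = 0 := by ring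
      rw [heq, h0]
  have hzFF : ∀ P : {P : Set Γ // IsCompact P ∧ A ⊆ interior P ∧ P ⊆ P₀},
      z ∈ closure (FF P) := by
    intro P
    rw [mem_closure_iff]
    intro O hOopen hzO
    obtain ⟨y, ⟨hyO, hyOA⟩, hyD⟩ := mem_closure_iff.mp (hzmem P) (O ∩ (closure OA)ᶜ)
      (hOopen.inter isClosed_closure.isOpen_compl) ⟨hzO, hzOA⟩
    exact ⟨y, hyO, hDFF P ⟨hyD, hyOA⟩⟩
  -- far-reaching boundary points
  set CC : {P : Set Γ // IsCompact P ∧ A ⊆ interior P ∧ P ⊆ P₀} → ℝ → Set Γ := fun P T₂ =>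
    {c | (c ∈ closure OA ∧ c ∈ L ∧ ∃ σ, 0 ≤ σ ∧
        (∀ r ∈ Icc (0:ℝ) σ, φ (c, -r) ∈ L) ∧ φ (c, -σ) ∈ P.1) ∧
      (∀ h' ∈ Icc (0:ℝ) T₂, φ (c, h') ∈ L) ∧
      ∀ h', 0 < h' → h' ≤ T₂ → φ (c, h') ∉ closure OA} with hCCdef
  have hCCne : ∀ (P : {P : Set Γ // IsCompact P ∧ A ⊆ interior P ∧ P ⊆ P₀}) (T₂ : ℝ),
      (CC P T₂).Nonempty := by
    intro P T₂
    set Short := φ '' ((closure OA ∩ L) ×ˢ Icc (0:ℝ) T₂) with hShortdef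
    have hShortcomp : IsCompact Short :=
      ((hLcomp.inter_left isClosed_closure).prod isCompact_Icc).image hc
    have hzShort : z ∉ Short := by
      rintro ⟨⟨c, e⟩, ⟨⟨hcOA, -⟩, -⟩, hze⟩
      have hcz : φ (z, -e) = c := by
        rw [← hze, hadd]
        have heq : e + -e = 0 := by ring
        rw [heq, h0]
      exact hclOAR c hcOA (by rw [← hcz]; exact hRinv z hzR (-e))
    obtain ⟨y, hyO, hyFF⟩ := mem_closure_iff.mp (hzFF P) Shortᶜ
      hShortcomp.isClosed.isOpen_compl hzShort
    obtain ⟨c, hcback, e, he0, hfwd, havoid, rfl⟩ := hyFF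
    by_cases hcase : e ≤ T₂
    · exact absurd ⟨(c, e), ⟨⟨hcback.1, hcback.2.1⟩, he0, hcase⟩, rfl⟩ hyO
    · push_neg at hcase
      exact ⟨c, hcback, fun h' hh' => hfwd h' ⟨hh'.1, hh'.2.trans (le_of_lt hcase)⟩,
        fun h' h1 h2 => havoid h' h1 (h2.trans (le_of_lt hcase))⟩
  haveI : Nonempty ({P : Set Γ // IsCompact P ∧ A ⊆ interior P ∧ P ⊆ P₀} × {t : ℝ // 0 ≤ t}) :=
    ⟨⟨hιne.some, ⟨0, le_rfl⟩⟩⟩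
  have hCCL : ∀ (P : {P : Set Γ // IsCompact P ∧ A ⊆ interior P ∧ P ⊆ P₀}) (T₂ : ℝ),
      CC P T₂ ⊆ L := fun P T₂ c hc' => hc'.1.2.1
  have hCCdir : Directed (· ⊇ ·)
      (fun k : {P : Set Γ // IsCompact P ∧ A ⊆ interior P ∧ P ⊆ P₀} × {t : ℝ // 0 ≤ t} =>
        closure (CC k.1 k.2.1)) := by
    rintro ⟨P, T⟩ ⟨Q, T'⟩
    obtain ⟨Rp, h1, h2⟩ := hdirP P Q
    refine ⟨⟨Rp, ⟨max T.1 T'.1, le_trans T.2 (le_max_left _ _)⟩⟩, ?_, ?_⟩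
    · apply closure_mono
      rintro c ⟨⟨c1, c2, σ, hs1, hs2, hs3⟩, cf, ca⟩
      exact ⟨⟨c1, c2, σ, hs1, hs2, h1 hs3⟩,
        fun h' hh' => cf h' ⟨hh'.1, hh'.2.trans (le_max_left _ _)⟩,
        fun h' hp hl => ca h' hp (hl.trans (le_max_left _ _))⟩
    · apply closure_mono
      rintro c ⟨⟨c1, c2, σ, hs1, hs2, hs3⟩, cf, ca⟩
      exact ⟨⟨c1, c2, σ, hs1, hs2, h2 hs3⟩,
        fun h' hh' => cf h' ⟨hh'.1, hh'.2.trans (le_max_right _ _)⟩,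
        fun h' hp hl => ca h' hp (hl.trans (le_max_right _ _))⟩
  have hfamCC : (⋂ k : {P : Set Γ // IsCompact P ∧ A ⊆ interior P ∧ P ⊆ P₀} × {t : ℝ // 0 ≤ t},
      closure (CC k.1 k.2.1)).Nonempty :=
    IsCompact.nonempty_iInter_of_directed_nonempty_isCompact_isClosed _ hCCdir
      (fun k => (hCCne k.1 k.2.1).closure)
      (fun k => IsCompact.of_isClosed_subset hLcomp isClosed_closure
        (closure_minimal (hCCL k.1 k.2.1) hLcomp.isClosed))
      (fun k => isClosed_closure)
  obtain ⟨cs, hcs⟩ := hfamCC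
  have hcsmem : ∀ P (T₂ : {t : ℝ // 0 ≤ t}), cs ∈ closure (CC P T₂.1) := by
    intro P T₂
    exact mem_iInter.mp hcs ⟨P, T₂⟩
  have hcsOA : cs ∈ closure OA := by
    have := hcsmem hιne.some ⟨0, le_rfl⟩
    exact (closure_minimal (fun c hc' => hc'.1.1) isClosed_closure) this
  have hcsL : cs ∈ L := by
    have := hcsmem hιne.some ⟨0, le_rfl⟩
    exact (closure_minimal (fun c hc' => hc'.1.2.1) hLcomp.isClosed) this
  have hfwdL : ∀ h', 0 ≤ h' → φ (cs, h') ∈ L := by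
    intro h' hh'
    have hsub : CC hιne.some h' ⊆ {c | ∀ r ∈ Icc (0:ℝ) h', φ (c, r) ∈ L} :=
      fun c hc' => hc'.2.1
    have hclosedT : IsClosed {c | ∀ r ∈ Icc (0:ℝ) h', φ (c, r) ∈ L} := by
      have : {c : Γ | ∀ r ∈ Icc (0:ℝ) h', φ (c, r) ∈ L} =
          ⋂ r ∈ Icc (0:ℝ) h', (fun c => φ (c, r)) ⁻¹' L := by
        ext c; simp only [mem_setOf_eq, mem_iInter, mem_preimage]
      rw [this]
      exact isClosed_biInter fun r _ => hLcomp.isClosed.preimage (aux_mapCont hc r)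
    exact closure_minimal hsub hclosedT (hcsmem hιne.some ⟨h', hh'⟩) h' ⟨hh', le_rfl⟩
  have hfwdOA : ∀ h', 0 < h' → φ (cs, h') ∉ OA := by
    intro h' hh'
    have hsub : CC hιne.some h' ⊆ {c | φ (c, h') ∈ OAᶜ} :=
      fun c hc' hmem => hc'.2.2 h' hh' le_rfl (subset_closure hmem)
    have hclosedT : IsClosed {c | φ (c, h') ∈ OAᶜ} :=
      (hOAopen.isClosed_compl).preimage (aux_mapCont hc h')
    exact closure_minimal hsub hclosedT (hcsmem hιne.some ⟨h', le_of_lt hh'⟩)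
  -- backward dichotomy
  have hdich : ∀ (P : {P : Set Γ // IsCompact P ∧ A ⊆ interior P ∧ P ⊆ P₀}) (T₃ : ℝ), 0 ≤ T₃ →
      cs ∈ (Prod.fst '' {q : Γ × ℝ | (q.2 ∈ Icc (0:ℝ) T₃ ∧
          ∀ r ∈ Icc (0:ℝ) q.2, φ (q.1, -r) ∈ L) ∧ φ (q.1, -q.2) ∈ P.1}) ∪
        {c | ∀ r ∈ Icc (0:ℝ) T₃, φ (c, -r) ∈ L} := by
    intro P T₃ hT₃
    have hpairclosed : IsClosed {q : Γ × ℝ | (q.2 ∈ Icc (0:ℝ) T₃ ∧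
        ∀ r ∈ Icc (0:ℝ) q.2, φ (q.1, -r) ∈ L) ∧ φ (q.1, -q.2) ∈ P.1} := by
      refine IsClosed.inter ?_ ?_
      · exact aux_isClosed_pairPath (hc.comp (continuous_fst.prodMk continuous_snd.neg))
          hLcomp.isClosed T₃
      · exact (P.2.1.isClosed).preimage (hc.comp (continuous_fst.prodMk continuous_snd.neg))
    have hpairsub : {q : Γ × ℝ | (q.2 ∈ Icc (0:ℝ) T₃ ∧
        ∀ r ∈ Icc (0:ℝ) q.2, φ (q.1, -r) ∈ L) ∧ φ (q.1, -q.2) ∈ P.1} ⊆ L ×ˢ Icc (0:ℝ) T₃ := by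
      rintro ⟨c, σ⟩ ⟨⟨hσI, hσp⟩, -⟩
      have := hσp 0 ⟨le_rfl, hσI.1⟩
      rw [neg_zero, h0] at this
      exact ⟨this, hσI⟩
    have hBclosed : IsClosed (Prod.fst '' {q : Γ × ℝ | (q.2 ∈ Icc (0:ℝ) T₃ ∧
        ∀ r ∈ Icc (0:ℝ) q.2, φ (q.1, -r) ∈ L) ∧ φ (q.1, -q.2) ∈ P.1}) :=
      ((IsCompact.of_isClosed_subset (hLcomp.prod isCompact_Icc) hpairclosed
        hpairsub).image continuous_fst).isClosed
    have hPclosed : IsClosed {c : Γ | ∀ r ∈ Icc (0:ℝ) T₃, φ (c, -r) ∈ L} := by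
      have : {c : Γ | ∀ r ∈ Icc (0:ℝ) T₃, φ (c, -r) ∈ L} =
          ⋂ r ∈ Icc (0:ℝ) T₃, (fun c => φ (c, -r)) ⁻¹' L := by
        ext c; simp only [mem_setOf_eq, mem_iInter, mem_preimage]
      rw [this]
      exact isClosed_biInter fun r _ => hLcomp.isClosed.preimage (aux_mapCont hc (-r))
    have hsub : CC P 0 ⊆ (Prod.fst '' {q : Γ × ℝ | (q.2 ∈ Icc (0:ℝ) T₃ ∧
        ∀ r ∈ Icc (0:ℝ) q.2, φ (q.1, -r) ∈ L) ∧ φ (q.1, -q.2) ∈ P.1}) ∪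
        {c | ∀ r ∈ Icc (0:ℝ) T₃, φ (c, -r) ∈ L} := by
      rintro c ⟨⟨-, -, σ, hσ0, hσpath, hσend⟩, -, -⟩
      by_cases hcase : σ ≤ T₃
      · exact Or.inl ⟨(c, σ), ⟨⟨⟨hσ0, hcase⟩, hσpath⟩, hσend⟩, rfl⟩
      · push_neg at hcase
        exact Or.inr fun r hr => hσpath r ⟨hr.1, hr.2.trans (le_of_lt hcase)⟩
    exact closure_minimal hsub (hBclosed.union hPclosed) (hcsmem P ⟨0, le_rfl⟩)
  by_cases hcaseI : ∀ T₃ : ℝ, 0 ≤ T₃ → ∀ r ∈ Icc (0:ℝ) T₃, φ (cs, -r) ∈ L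
  · -- Case I : the whole orbit of cs stays in L, so cs ∈ S and then cs ∈ R : contradiction
    have horb : ∀ t : ℝ, φ (cs, t) ∈ L := by
      intro t
      rcases le_or_gt 0 t with h | h
      · exact hfwdL t h
      · have := hcaseI (-t) (by linarith) (-t) ⟨by linarith, le_rfl⟩
        rwa [neg_neg] at this
    have hcsS : cs ∈ S := by
      rw [← hmax]
      exact ⟨hLU hcsL, fun t => hLU (horb t)⟩
    have hcsA : cs ∉ A := fun h => hfwdOA 1 one_pos (hAVA (hAinv cs h 1))
    have homega : omegaSet φ {cs} ∩ A = ∅ := by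
      have hsub : φ '' ({cs} ×ˢ Ici (0:ℝ)) ⊆ {cs} ∪ (L ∩ OAᶜ) := by
        rintro y ⟨⟨c₁, s⟩, ⟨hc₁, hs⟩, rfl⟩
        rw [mem_singleton_iff] at hc₁
        subst hc₁
        rcases eq_or_lt_of_le (show (0:ℝ) ≤ s from mem_Ici.mp hs) with h | h
        · left
          have hs0 : s = 0 := h.symm
          subst hs0
          simp only [h0]
          rfl
        · exact Or.inr ⟨hfwdL s (le_of_lt h), hfwdOA s h⟩
      have hclosedRHS : IsClosed ({cs} ∪ (L ∩ OAᶜ)) :=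
        isClosed_singleton.union (hLcomp.isClosed.inter hOAopen.isClosed_compl)
      apply eq_empty_iff_forall_notMem.mpr
      rintro y ⟨hyΩ, hyA⟩
      have hy : y ∈ {cs} ∪ (L ∩ OAᶜ) := closure_minimal hsub hclosedRHS hyΩ.1
      rcases hy with h | h
      · rw [mem_singleton_iff] at h
        subst h
        exact hcsA hyA
      · exact h.2 (hAVA hyA)
    have hcsR : cs ∈ R := by
      rw [hReq]
      exact ⟨hcsS, homega⟩
    exact hclOAR cs hcsOA hcsR
  · -- Case II : bounded backward reachability, cluster backward times
    push_neg at hcaseI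
    obtain ⟨T₃, hT₃0, hT₃⟩ := hcaseI
    have hBsmem : ∀ P : {P : Set Γ // IsCompact P ∧ A ⊆ interior P ∧ P ⊆ P₀},
        cs ∈ Prod.fst '' {q : Γ × ℝ | (q.2 ∈ Icc (0:ℝ) T₃ ∧
        ∀ r ∈ Icc (0:ℝ) q.2, φ (q.1, -r) ∈ L) ∧ φ (q.1, -q.2) ∈ P.1} := by
      intro P
      rcases hdich P T₃ hT₃0 with h | h
      · exact h
      · obtain ⟨r, hr1, hr2⟩ := hT₃
        exact absurd (h r hr1) hr2
    set SB : {P : Set Γ // IsCompact P ∧ A ⊆ interior P ∧ P ⊆ P₀} → Set ℝ := fun P =>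
      {σ | (σ ∈ Icc (0:ℝ) T₃ ∧ ∀ r ∈ Icc (0:ℝ) σ, φ (cs, -r) ∈ L) ∧ φ (cs, -σ) ∈ P.1}
      with hSBdef
    have hSBne : ∀ P : {P : Set Γ // IsCompact P ∧ A ⊆ interior P ∧ P ⊆ P₀},
        (SB P).Nonempty := by
      intro P
      obtain ⟨⟨c₁, σ⟩, hq, hc₁⟩ := hBsmem P
      have hcc : c₁ = cs := hc₁
      rw [hcc] at hq
      exact ⟨σ, hq⟩
    have hSBclosed : ∀ P : {P : Set Γ // IsCompact P ∧ A ⊆ interior P ∧ P ⊆ P₀},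
        IsClosed (SB P) := by
      intro P
      have : SB P = (fun σ : ℝ => ((cs : Γ), σ)) ⁻¹' {q : Γ × ℝ | (q.2 ∈ Icc (0:ℝ) T₃ ∧
          ∀ r ∈ Icc (0:ℝ) q.2, φ (q.1, -r) ∈ L) ∧ φ (q.1, -q.2) ∈ P.1} := by
        ext σ; simp only [hSBdef, mem_setOf_eq, mem_preimage]
      rw [this]
      refine IsClosed.preimage (continuous_const.prodMk continuous_id) ?_
      refine IsClosed.inter ?_ ?_
      · exact aux_isClosed_pairPath (hc.comp (continuous_fst.prodMk continuous_snd.neg))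
          hLcomp.isClosed T₃
      · exact (P.2.1.isClosed).preimage (hc.comp (continuous_fst.prodMk continuous_snd.neg))
    have hSBcomp : ∀ P : {P : Set Γ // IsCompact P ∧ A ⊆ interior P ∧ P ⊆ P₀},
        IsCompact (SB P) := fun P =>
      IsCompact.of_isClosed_subset isCompact_Icc (hSBclosed P) (fun σ hσ => hσ.1.1)
    have hSBdir : Directed (· ⊇ ·) SB := by
      intro P Q
      obtain ⟨Rp, h1, h2⟩ := hdirP P Q
      exact ⟨Rp, fun σ hσ => ⟨hσ.1, h1 hσ.2⟩, fun σ hσ => ⟨hσ.1, h2 hσ.2⟩⟩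
    have hSBfam : (⋂ P, SB P).Nonempty :=
      IsCompact.nonempty_iInter_of_directed_nonempty_isCompact_isClosed _ hSBdir hSBne hSBcomp
        hSBclosed
    obtain ⟨σs, hσs⟩ := hSBfam
    have hσsA : φ (cs, -σs) ∈ A :=
      hPAinter _ (fun P => (mem_iInter.mp hσs P).2)
    have hcsA : cs ∈ A := by
      have := hAinv _ hσsA σs
      rw [hadd] at this
      have heq : -σs + σs = 0 := by ring
      rwa [heq, h0] at this
    exact hfwdOA 1 one_pos (hAVA (hAinv cs hcsA 1))

end H

/-- **Existence of index triples**: for any attractor-repeller pair `(A, R)` in an isolated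
invariant set `S` there exist compact sets `N ⊆ M ⊆ L` such that `(L, M)` is an index pair
for `R`, `(L, N)` is an index pair for `S`, and `(M, N)` is an index pair for `A`. -/
theorem exists_index_triple
    {Γ : Type*} [TopologicalSpace Γ] [LocallyCompactSpace Γ] [T2Space Γ]
    (φ : Γ × ℝ → Γ) (hφ : IsFlow φ) (S : Set Γ) (hS : IsIsolatedInvariantSet φ S)
    (A R : Set Γ) (hAR : IsAttractorRepellerPair φ S A R) :
    ∃ L M N : Set Γ, N ⊆ M ∧ M ⊆ L ∧
      IsIndexPair φ R L M ∧ IsIndexPair φ S L N ∧ IsIndexPair φ A M N := by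
  obtain ⟨hc, h0, hadd⟩ := hφ
  obtain ⟨hScomp, U, hUcomp, hUnhd, hmax⟩ := hS
  have hSU : S ⊆ interior U := subset_interior_iff_mem_nhdsSet.mpr hUnhd
  have hSinv : ∀ x ∈ S, ∀ t : ℝ, φ (x, t) ∈ S := by
    intro x hx t
    rw [← hmax] at hx ⊢
    exact aux_maxInv_invariant hadd hx t
  obtain ⟨L, N₀, K, hLcomp, hLU, hSL, hSK, hN₀L, hN₀K, hLext, hCB, hClaimB, hNIIIcore⟩ :=
    aux_spack hc h0 hadd hUcomp hSU hmax hScomp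
  have hSLset : S ⊆ L := hSL.trans interior_subset
  have hNL : closure N₀ ⊆ L := closure_minimal hN₀L hLcomp.isClosed
  have hNcomp : IsCompact (closure N₀) :=
    IsCompact.of_isClosed_subset hLcomp isClosed_closure hNL
  have hNK : ∀ y ∈ closure N₀, y ∉ interior K := fun y hy =>
    (closure_minimal (fun z hz => hN₀K z hz) isOpen_interior.isClosed_compl) hy
  have hNII : ∀ x ∈ closure N₀, ∀ t : ℝ, 0 ≤ t → (∀ s ∈ Icc (0:ℝ) t, φ (x, s) ∈ L) →
      ∀ s ∈ Icc (0:ℝ) t, φ (x, s) ∈ closure N₀ := by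
    intro x hx t ht hpath s hs
    have hres : ∀ p ∈ Icc (0:ℝ) s, φ (x, p) ∈ L := fun p hp => hpath p ⟨hp.1, hp.2.trans hs.2⟩
    rcases aux_closure_ext hc hLU hCB hClaimB x hx s hs.1 hres with h | h
    · exact h
    · exact subset_closure h
  have hNIII : ∀ x ∈ L, ∀ t : ℝ, 0 ≤ t → φ (x, t) ∉ L →
      ∃ s ∈ Icc (0:ℝ) t, φ (x, s) ∈ closure N₀ := by
    intro x hx t ht hnot
    have hexq : ∃ q ∈ Icc (0:ℝ) t, φ (x, q) ∉ U := by
      by_contra hall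
      push_neg at hall
      exact hnot (hLext x hx t ht hall t ⟨ht, le_rfl⟩)
    obtain ⟨s, hs, hsN₀⟩ := hNIIIcore x hx t ht hexq
    exact ⟨s, hs, subset_closure hsN₀⟩
  have hOSsub : interior L ∩ interior K ⊆ L \ closure N₀ := fun x hx =>
    ⟨interior_subset hx.1, fun hN => hNK x hN hx.2⟩
  have hSOS : S ⊆ interior L ∩ interior K := fun x hx => ⟨hSL hx, hSK hx⟩
  have pairS : IsIndexPair φ S L (closure N₀) := by
    refine ⟨hLcomp, hNcomp, hNL, ⟨?_, ?_, ?_⟩, hNII, hNIII⟩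
    · exact IsCompact.of_isClosed_subset hLcomp isClosed_closure
        (closure_minimal diff_subset hLcomp.isClosed)
    · rw [mem_nhdsSet_iff_exists]
      exact ⟨interior L ∩ interior K, isOpen_interior.inter isOpen_interior, hSOS,
        hOSsub.trans subset_closure⟩
    · apply subset_antisymm
      · rw [← hmax]
        exact aux_maxInv_mono ((closure_minimal diff_subset hLcomp.isClosed).trans hLU)
      · intro x hx
        exact ⟨subset_closure (hOSsub (hSOS hx)),
          fun t => subset_closure (hOSsub (hSOS (hSinv x hx t)))⟩
  obtain ⟨⟨hAS, U_A, -, -, hUAeq⟩, ⟨hRS, U_R, -, -, hUReq⟩, hAeq, hReq⟩ := hAR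
  have hAinv : ∀ x ∈ A, ∀ t : ℝ, φ (x, t) ∈ A := by
    intro x hx t
    rw [← hUAeq] at hx ⊢
    exact aux_maxInv_invariant hadd hx t
  have hAclosed : IsClosed A := by
    rw [← hUAeq]
    exact aux_isClosed_maxInv hc isClosed_closure
  have hAcomp : IsCompact A := IsCompact.of_isClosed_subset hScomp hAclosed hAS
  have hRinv : ∀ x ∈ R, ∀ t : ℝ, φ (x, t) ∈ R := by
    intro x hx t
    rw [← hUReq] at hx ⊢
    exact aux_maxInv_invariant hadd hx t
  have hRclosed : IsClosed R := by
    rw [← hUReq]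
    exact aux_isClosed_maxInv hc isClosed_closure
  have hRcomp : IsCompact R := IsCompact.of_isClosed_subset hScomp hRclosed hRS
  have hARdisj : ∀ x ∈ A, x ∉ R := by
    intro x hxA hxR
    have hxA' : x ∈ compAttractor φ S R := by rw [← hAeq]; exact hxA
    obtain ⟨w, hwR, hwΩ⟩ := aux_omegaStar_nonempty hc h0 hadd hRcomp
      (fun t _ => hRinv x hxR t)
    have hmem : w ∈ omegaStarSet φ {x} ∩ R := ⟨hwΩ, hwR⟩
    rw [hxA'.2] at hmem
    exact hmem
  obtain ⟨Pst, hPstcomp, hAPst, hPstZ⟩ := aux_lemZ hc h0 hadd hLcomp hLU hmax hAcomp hAinv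
    hRclosed hRinv hARdisj hReq
  set DP := {x | ∃ t, 0 ≤ t ∧ (∀ r ∈ Icc (0:ℝ) t, φ (x, -r) ∈ L) ∧ φ (x, -t) ∈ Pst} with hDPdef
  have hDPL : DP ⊆ L := by
    rintro x ⟨t, ht, hpath, -⟩
    have := hpath 0 ⟨le_rfl, ht⟩
    rwa [neg_zero, h0] at this
  have hDPmem : ∀ x, x ∈ Pst → x ∈ L → x ∈ DP := by
    intro x h1 h2
    refine ⟨0, le_rfl, ?_, ?_⟩
    · rintro r ⟨hr1, hr2⟩
      have : r = 0 := le_antisymm hr2 hr1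
      subst this
      rwa [neg_zero, h0]
    · rwa [neg_zero, h0]
  have hDPext : ∀ x ∈ DP, ∀ u, 0 ≤ u → (∀ p ∈ Icc (0:ℝ) u, φ (x, p) ∈ U) →
      φ (x, u) ∈ DP := by
    rintro x ⟨t, ht, hpath, hend⟩ u hu hUpath
    have hLpath : ∀ p ∈ Icc (0:ℝ) u, φ (x, p) ∈ L :=
      hLext x (hDPL ⟨t, ht, hpath, hend⟩) u hu hUpath
    refine ⟨t + u, by linarith, ?_, ?_⟩
    · rintro r ⟨hr0, hr⟩
      rw [hadd]
      by_cases hcase : 0 ≤ u - r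
      · exact hLpath (u + -r) ⟨by linarith, by linarith⟩
      · push_neg at hcase
        have heq : u + -r = -(r - u) := by ring
        rw [heq]
        exact hpath (r - u) ⟨by linarith, by linarith⟩
    · rw [hadd]
      have heq : u + -(t + u) = -t := by ring
      rw [heq]
      exact hend
  have hDclL : closure DP ⊆ L := closure_minimal hDPL hLcomp.isClosed
  have hML : closure N₀ ∪ closure DP ⊆ L := union_subset hNL hDclL
  have hMcomp : IsCompact (closure N₀ ∪ closure DP) :=
    hNcomp.union (IsCompact.of_isClosed_subset hLcomp isClosed_closure hDclL)
  have hMclosed : IsClosed (closure N₀ ∪ closure DP) := isClosed_closure.union isClosed_closure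
  have hMii : ∀ x ∈ closure N₀ ∪ closure DP, ∀ t : ℝ, 0 ≤ t →
      (∀ s ∈ Icc (0:ℝ) t, φ (x, s) ∈ L) →
      ∀ s ∈ Icc (0:ℝ) t, φ (x, s) ∈ closure N₀ ∪ closure DP := by
    intro x hx t ht hpath s hs
    rcases hx with hxN | hxD
    · exact Or.inl (hNII x hxN t ht hpath s hs)
    · have hres : ∀ p ∈ Icc (0:ℝ) s, φ (x, p) ∈ L := fun p hp => hpath p ⟨hp.1, hp.2.trans hs.2⟩
      rcases aux_closure_ext hc hLU hCB hDPext x hxD s hs.1 hres with h | h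
      · exact Or.inr h
      · exact Or.inl (subset_closure h)
  have hRN : ∀ x ∈ R, x ∉ closure N₀ := fun x hx hN => hNK x hN (hSK (hRS hx))
  have hRD : ∀ x ∈ R, x ∉ closure DP := fun x hx hD =>
    (eq_empty_iff_forall_notMem.mp hPstZ x) ⟨hD, hx⟩
  have hRM : ∀ x ∈ R, x ∉ closure N₀ ∪ closure DP := fun x hx h =>
    h.elim (hRN x hx) (hRD x hx)
  have hOA'sub : interior Pst ∩ interior L ∩ interior K ⊆
      (closure N₀ ∪ closure DP) \ closure N₀ := by
    rintro x ⟨⟨h1, h2⟩, h3⟩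
    exact ⟨Or.inr (subset_closure (hDPmem x (interior_subset h1) (interior_subset h2))),
      fun hN => hNK x hN h3⟩
  have hAOA' : A ⊆ interior Pst ∩ interior L ∩ interior K := fun a ha =>
    ⟨⟨hAPst ha, hSL (hAS ha)⟩, hSK (hAS ha)⟩
  have pairR : IsIndexPair φ R L (closure N₀ ∪ closure DP) := by
    refine ⟨hLcomp, hMcomp, hML, ⟨?_, ?_, ?_⟩, hMii, ?_⟩
    · exact IsCompact.of_isClosed_subset hLcomp isClosed_closure
        (closure_minimal diff_subset hLcomp.isClosed)
    · rw [mem_nhdsSet_iff_exists]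
      exact ⟨interior L ∩ (closure N₀ ∪ closure DP)ᶜ,
        isOpen_interior.inter hMclosed.isOpen_compl,
        fun x hx => ⟨hSL (hRS hx), hRM x hx⟩,
        fun x hx => subset_closure ⟨interior_subset hx.1, hx.2⟩⟩
    · apply subset_antisymm
      · intro zz hzz
        have hzzS : zz ∈ S := by
          rw [← hmax]
          exact aux_maxInv_mono ((closure_minimal diff_subset hLcomp.isClosed).trans hLU) hzz
        by_contra hzzR
        have hne : omegaSet φ {zz} ∩ A ≠ ∅ := by
          intro hempty
          apply hzzR
          rw [hReq]
          exact ⟨hzzS, hempty⟩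
        obtain ⟨a', ha'Ω, ha'A⟩ := nonempty_iff_ne_empty.mpr hne
        have hfwdsub : φ '' ({zz} ×ˢ Ici (0:ℝ)) ⊆
            closure (L \ (closure N₀ ∪ closure DP)) := by
          rintro y ⟨⟨z₁, s⟩, ⟨hz₁, -⟩, rfl⟩
          rw [mem_singleton_iff] at hz₁
          subst hz₁
          exact hzz.2 s
        have ha'mem : a' ∈ closure (L \ (closure N₀ ∪ closure DP)) :=
          closure_minimal hfwdsub isClosed_closure ha'Ω.1
        have hLM : L \ (closure N₀ ∪ closure DP) ⊆ Pstᶜ := fun x hx hP =>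
          hx.2 (Or.inr (subset_closure (hDPmem x hP hx.1)))
        have hcl : closure (L \ (closure N₀ ∪ closure DP)) ⊆ (interior Pst)ᶜ := by
          rw [← closure_compl]
          exact closure_mono hLM
        exact hcl ha'mem (hAPst ha'A)
      · intro x hx
        have hmem : ∀ t : ℝ, φ (x, t) ∈ closure (L \ (closure N₀ ∪ closure DP)) := fun t =>
          subset_closure ⟨hSLset (hRS (hRinv x hx t)), hRM _ (hRinv x hx t)⟩
        refine ⟨?_, hmem⟩
        have := hmem 0
        rwa [h0] at this
    · intro x hx t ht hnot
      obtain ⟨s, hs, hsN⟩ := hNIII x hx t ht hnot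
      exact ⟨s, hs, Or.inl hsN⟩
  have pairA : IsIndexPair φ A (closure N₀ ∪ closure DP) (closure N₀) := by
    refine ⟨hMcomp, hNcomp, subset_union_left, ⟨?_, ?_, ?_⟩, ?_, ?_⟩
    · exact IsCompact.of_isClosed_subset hLcomp isClosed_closure
        (closure_minimal (diff_subset.trans hML) hLcomp.isClosed)
    · rw [mem_nhdsSet_iff_exists]
      exact ⟨interior Pst ∩ interior L ∩ interior K,
        (isOpen_interior.inter isOpen_interior).inter isOpen_interior, hAOA',
        hOA'sub.trans subset_closure⟩
    · apply subset_antisymm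
      · intro zz hzz
        have hzzS : zz ∈ S := by
          rw [← hmax]
          exact aux_maxInv_mono
            ((closure_minimal (diff_subset.trans hML) hLcomp.isClosed).trans hLU) hzz
        by_contra hzzA
        have hne : omegaStarSet φ {zz} ∩ R ≠ ∅ := by
          intro hempty
          apply hzzA
          rw [hAeq]
          exact ⟨hzzS, hempty⟩
        obtain ⟨r', hr'Ω, hr'R⟩ := nonempty_iff_ne_empty.mpr hne
        have hbwdsub : φ '' ({zz} ×ˢ Iic (0:ℝ)) ⊆
            closure ((closure N₀ ∪ closure DP) \ closure N₀) := by
          rintro y ⟨⟨z₁, s⟩, ⟨hz₁, -⟩, rfl⟩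
          rw [mem_singleton_iff] at hz₁
          subst hz₁
          exact hzz.2 s
        have hr'mem : r' ∈ closure ((closure N₀ ∪ closure DP) \ closure N₀) :=
          closure_minimal hbwdsub isClosed_closure hr'Ω.1
        have hMN : (closure N₀ ∪ closure DP) \ closure N₀ ⊆ closure DP := fun x hx =>
          hx.1.resolve_left hx.2
        have hr'D : r' ∈ closure DP := closure_minimal hMN isClosed_closure hr'mem
        exact (eq_empty_iff_forall_notMem.mp hPstZ r') ⟨hr'D, hr'R⟩
      · intro a ha
        have hmem : ∀ t : ℝ, φ (a, t) ∈ closure ((closure N₀ ∪ closure DP) \ closure N₀) :=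
          fun t => subset_closure (hOA'sub (hAOA' (hAinv a ha t)))
        refine ⟨?_, hmem⟩
        have := hmem 0
        rwa [h0] at this
    · intro x hx t ht hpath s hs
      exact hNII x hx t ht (fun p hp => hML (hpath p hp)) s hs
    · intro x hx t ht hnot
      have hexq : ∃ q ∈ Icc (0:ℝ) t, φ (x, q) ∉ L := by
        by_contra hall
        push_neg at hall
        exact hnot (hMii x hx t ht hall t ⟨ht, le_rfl⟩)
      obtain ⟨q, hq, hqL⟩ := hexq
      obtain ⟨s, hs, hsN⟩ := hNIII x (hML hx) q hq.1 hqL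
      exact ⟨s, ⟨hs.1, hs.2.trans hq.2⟩, hsN⟩
  exact ⟨L, closure N₀ ∪ closure DP, closure N₀, subset_union_left, hML, pairR, pairS, pairA⟩
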